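/- Universal property of H(w): let w be a preregular m-linear form and H any Hopf algebra with elements v^μ_ν satisfying Δ(v^μ_ν) = Σ v^μ_λ ⊗ v^λ_ν, ε(v^μ_ν) = δ^μ_ν, and Σ w_{μ₁...μ_m} v^{μ₁}_{λ₁} ⋯ v^{μ_m}_{λ_m} = w_{λ₁...λ_m}·1. Then there is a unique Hopf algebra homomorphism φ : H(w) → H with φ(u^μ_ν) = v^μ_ν for all μ, ν. -/
import Mathlib

open TensorProduct

namespace Stmt15

/-- Free algebra on the `2n²` generators `u^μ_ν`, `s^μ_ν`. -/
abbrev FA (K : Type*) [Field K] (n : ℕ) :=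
  FreeAlgebra K ((Fin n × Fin n) ⊕ (Fin n × Fin n))

/-- The generator `u^μ_ν`. -/
def Ug (K : Type*) [Field K] {n : ℕ} (μ ν : Fin n) : FA K n :=
  FreeAlgebra.ι K (Sum.inl (μ, ν))

/-- The generator `s^μ_ν`. -/
def Sg (K : Type*) [Field K] {n : ℕ} (μ ν : Fin n) : FA K n :=
  FreeAlgebra.ι K (Sum.inr (μ, ν))

/-- The defining relations of `H(w)`:
`Σ_λ u^μ_λ s^λ_ν = δ^μ_ν`, `Σ Q^λ_ν u^ρ_λ (Q⁻¹)^σ_ρ s^μ_σ = δ^μ_ν`, and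
`Σ w_{λ₁…λ_M} u^{λ₁}_{μ₁} ⋯ u^{λ_M}_{μ_M} = w_{μ₁…μ_M}·1`. -/
inductive HwRel (K : Type*) [Field K] (n m : ℕ) (wc : (Fin (m + 1) → Fin n) → K)
    (Q Qi : Matrix (Fin n) (Fin n) K) : FA K n → FA K n → Prop
  | us (μ ν : Fin n) :
      HwRel K n m wc Q Qi (∑ lam : Fin n, Ug K μ lam * Sg K lam ν)
        (if μ = ν then 1 else 0)
  | tus (μ ν : Fin n) :
      HwRel K n m wc Q Qi
        (∑ lam : Fin n, ∑ ρ : Fin n, ∑ σ : Fin n,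
          (Q lam ν * Qi σ ρ) • (Ug K ρ lam * Sg K μ σ))
        (if μ = ν then 1 else 0)
  | invw (μs : Fin (m + 1) → Fin n) :
      HwRel K n m wc Q Qi
        (∑ ls : Fin (m + 1) → Fin n,
          wc ls • (List.ofFn fun i => Ug K (ls i) (μs i)).prod)
        (algebraMap K (FA K n) (wc μs))

/-- The algebra `H(w)`. -/
abbrev Hw (K : Type*) [Field K] (n m : ℕ) (wc : (Fin (m + 1) → Fin n) → K)
    (Q Qi : Matrix (Fin n) (Fin n) K) := RingQuot (HwRel K n m wc Q Qi)

/-- The class of `u^μ_ν` in `H(w)`. -/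
def uu (K : Type*) [Field K] (n m : ℕ) (wc : (Fin (m + 1) → Fin n) → K)
    (Q Qi : Matrix (Fin n) (Fin n) K) (μ ν : Fin n) : Hw K n m wc Q Qi :=
  RingQuot.mkAlgHom K (HwRel K n m wc Q Qi) (Ug K μ ν)

/-- The class of `s^μ_ν` in `H(w)`. -/
def ss (K : Type*) [Field K] (n m : ℕ) (wc : (Fin (m + 1) → Fin n) → K)
    (Q Qi : Matrix (Fin n) (Fin n) K) (μ ν : Fin n) : Hw K n m wc Q Qi :=
  RingQuot.mkAlgHom K (HwRel K n m wc Q Qi) (Sg K μ ν)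

/- ---------- auxiliary lemmas ---------- -/

lemma sum_cons_eq {M : Type*} [AddCommMonoid M] {n m : ℕ}
    (g : (Fin (m + 1) → Fin n) → M) :
    ∑ μs : Fin (m + 1) → Fin n, g μs
      = ∑ τ : Fin n, ∑ μ' : Fin m → Fin n, g (Fin.cons τ μ') := by
  calc ∑ μs : Fin (m + 1) → Fin n, g μs
      = ∑ q : Fin n × (Fin m → Fin n), g (Fin.cons q.1 q.2) :=
        (Fintype.sum_equiv (Fin.consEquiv fun _ => Fin n) _ _ fun q => rfl).symm
    _ = _ := Fintype.sum_prod_type _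

lemma sum_snoc_eq {M : Type*} [AddCommMonoid M] {n m : ℕ}
    (g : (Fin (m + 1) → Fin n) → M) :
    ∑ μs : Fin (m + 1) → Fin n, g μs
      = ∑ τ : Fin n, ∑ μ' : Fin m → Fin n, g (Fin.snoc μ' τ) := by
  calc ∑ μs : Fin (m + 1) → Fin n, g μs
      = ∑ q : Fin n × (Fin m → Fin n), g (Fin.snoc q.2 q.1) :=
        (Fintype.sum_equiv (Fin.snocEquiv fun _ => Fin n) _ _ fun q => rfl).symm
    _ = _ := Fintype.sum_prod_type _

lemma prod_ofFn_succ {H : Type*} [Monoid H] {m : ℕ} (g : Fin (m + 1) → H) :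
    (List.ofFn g).prod = g 0 * (List.ofFn fun i : Fin m => g i.succ).prod := by
  rw [List.ofFn_succ, List.prod_cons]

lemma prod_ofFn_snoc {H : Type*} [Monoid H] {m : ℕ} (g : Fin (m + 1) → H) :
    (List.ofFn g).prod
      = (List.ofFn fun i : Fin m => g i.castSucc).prod * g (Fin.last m) := by
  rw [List.ofFn_succ', List.concat_eq_append, List.prod_append, List.prod_cons,
    List.prod_nil, mul_one]

/-- Theorem 5.3, universal property of `H(w)`: for any Hopf algebra
`H` with a multiplicative matrix `v` preserving the preregular form `w`, there is a
unique Hopf algebra homomorphism `φ : H(w) → H` with `φ(u^μ_ν) = v^μ_ν` (it then also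
carries `s^μ_ν = S(u^μ_ν)` to `S(v^μ_ν)`). -/
theorem stmt_15 {K : Type*} [Field K] {n m : ℕ} (hn : 2 ≤ n) (hm : 1 ≤ m)
    (wc : (Fin (m + 1) → Fin n) → K) (Q Qi : Matrix (Fin n) (Fin n) K)
    (hQQi : Q * Qi = 1) (hQiQ : Qi * Q = 1)
    (hcyc : ∀ ls : Fin (m + 1) → Fin n,
      wc ls = ∑ lam : Fin n, Q lam (ls (Fin.last m)) * wc (Fin.cons lam (Fin.init ls)))
    (hwt : ∃ wt : (Fin (m + 1) → Fin n) → K, ∀ μ ν : Fin n,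
      ∑ l : Fin m → Fin n, wt (Fin.cons μ l) * wc (Fin.snoc l ν)
        = if μ = ν then 1 else 0)
    {H : Type*} [Ring H] [HopfAlgebra K H] (v : Fin n → Fin n → H)
    (hcomul : ∀ μ ν : Fin n,
      Coalgebra.comul (R := K) (v μ ν) = ∑ lam : Fin n, v μ lam ⊗ₜ[K] v lam ν)
    (hcounit : ∀ μ ν : Fin n,
      Coalgebra.counit (R := K) (v μ ν) = if μ = ν then (1 : K) else 0)
    (hpres : ∀ ls : Fin (m + 1) → Fin n,
      ∑ μs : Fin (m + 1) → Fin n,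
        wc μs • (List.ofFn fun i => v (μs i) (ls i)).prod = wc ls • (1 : H)) :
    ∃! φ : Hw K n m wc Q Qi →ₐ[K] H,
      (∀ μ ν : Fin n, φ (uu K n m wc Q Qi μ ν) = v μ ν) ∧
      (∀ μ ν : Fin n,
        φ (ss K n m wc Q Qi μ ν) = HopfAlgebra.antipode (R := K) (v μ ν)) := by
  classical
  obtain ⟨wt, hwt⟩ := hwt
  -- the candidate map on the free algebra
  set f : FA K n →ₐ[K] H :=
    FreeAlgebra.lift K (Sum.elim (fun p : Fin n × Fin n => v p.1 p.2)
      (fun p : Fin n × Fin n => HopfAlgebra.antipode (R := K) (v p.1 p.2))) with hf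
  have hfU : ∀ μ ν : Fin n, f (Ug K μ ν) = v μ ν := by
    intro μ ν; simp [hf, Ug]
  have hfS : ∀ μ ν : Fin n,
      f (Sg K μ ν) = HopfAlgebra.antipode (R := K) (v μ ν) := by
    intro μ ν; simp [hf, Sg]
  have hfprod : ∀ (a b : Fin (m + 1) → Fin n),
      f (List.ofFn fun i => Ug K (a i) (b i)).prod
        = (List.ofFn fun i => v (a i) (b i)).prod := by
    intro a b
    rw [map_list_prod, List.map_ofFn]
    simp [Function.comp_def, hfU]
  -- v·S(v) = δ
  have hVS : ∀ μ ν : Fin n,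
      ∑ σ : Fin n, v μ σ * HopfAlgebra.antipode (R := K) (v σ ν)
        = if μ = ν then (1 : H) else 0 := by
    intro μ ν
    have h := HopfAlgebra.mul_antipode_lTensor_comul_apply (R := K) (v μ ν)
    rw [hcomul, hcounit] at h
    simpa [map_sum, LinearMap.mul'_apply, apply_ite (algebraMap K H)] using h
  -- auxiliary scalar identities from cyclicity
  have hcw : ∀ (l : Fin m → Fin n) (ν : Fin n),
      ∑ lam : Fin n, Q lam ν * wc (Fin.cons lam l) = wc (Fin.snoc l ν) := by
    intro l ν
    have h := hcyc (Fin.snoc l ν)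
    simpa [Fin.snoc_last, Fin.init_snoc] using h.symm
  have hQiw : ∀ (ρ : Fin n) (μ' : Fin m → Fin n),
      ∑ σ : Fin n, Qi σ ρ * wc (Fin.snoc μ' σ) = wc (Fin.cons ρ μ') := by
    intro ρ μ'
    have hx : ∀ σ : Fin n, wc (Fin.snoc μ' σ) = ∑ τ : Fin n, Q τ σ * wc (Fin.cons τ μ') := by
      intro σ
      simpa [Fin.snoc_last, Fin.init_snoc] using hcyc (Fin.snoc μ' σ)
    calc ∑ σ : Fin n, Qi σ ρ * wc (Fin.snoc μ' σ)
        = ∑ τ : Fin n, (∑ σ : Fin n, Q τ σ * Qi σ ρ) * wc (Fin.cons τ μ') := by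
          simp_rw [hx, Finset.mul_sum, Finset.sum_mul]
          rw [Finset.sum_comm]
          exact Finset.sum_congr rfl fun τ _ => Finset.sum_congr rfl fun σ _ => by ring
      _ = wc (Fin.cons ρ μ') := by
          simp_rw [← Matrix.mul_apply, hQQi, Matrix.one_apply, ite_mul, one_mul, zero_mul]
          simp
  -- the key identity (∗)
  have hstar : ∀ (l : Fin m → Fin n) (ν : Fin n),
      ∑ μ' : Fin m → Fin n,
          wc (Fin.snoc μ' ν) • (List.ofFn fun i => v (μ' i) (l i)).prod
        = ∑ σ : Fin n, wc (Fin.snoc l σ) • HopfAlgebra.antipode (R := K) (v σ ν) := by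
    intro l ν
    have e1 : ∀ σ : Fin n,
        wc (Fin.snoc l σ) • HopfAlgebra.antipode (R := K) (v σ ν)
          = ∑ μs : Fin (m + 1) → Fin n,
              wc μs • ((List.ofFn fun i => v (μs i) ((Fin.snoc l σ : Fin (m + 1) → Fin n) i)).prod
                * HopfAlgebra.antipode (R := K) (v σ ν)) := by
      intro σ
      calc wc (Fin.snoc l σ) • HopfAlgebra.antipode (R := K) (v σ ν)
          = (wc (Fin.snoc l σ) • (1 : H)) * HopfAlgebra.antipode (R := K) (v σ ν) := by
            rw [smul_mul_assoc, one_mul]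
        _ = (∑ μs : Fin (m + 1) → Fin n,
              wc μs • (List.ofFn fun i => v (μs i) ((Fin.snoc l σ : Fin (m + 1) → Fin n) i)).prod)
                * HopfAlgebra.antipode (R := K) (v σ ν) := by rw [hpres]
        _ = _ := by rw [Finset.sum_mul]; simp only [smul_mul_assoc]
    calc ∑ μ' : Fin m → Fin n,
          wc (Fin.snoc μ' ν) • (List.ofFn fun i => v (μ' i) (l i)).prod
        = ∑ μs : Fin (m + 1) → Fin n, wc μs •
            ((List.ofFn fun i : Fin m => v (μs i.castSucc) (l i)).prod
              * if μs (Fin.last m) = ν then (1 : H) else 0) := by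
          rw [sum_snoc_eq (n := n) (m := m)]
          rw [Finset.sum_comm]
          refine Finset.sum_congr rfl fun μ' _ => ?_
          simp only [Fin.snoc_castSucc, Fin.snoc_last, mul_ite, mul_one, mul_zero,
            smul_ite, smul_zero]
          rw [Finset.sum_ite_eq' Finset.univ ν
            (fun τ => wc (Fin.snoc μ' τ) • (List.ofFn fun i : Fin m => v (μ' i) (l i)).prod)]
          simp
        _ = ∑ μs : Fin (m + 1) → Fin n, wc μs •
            ((List.ofFn fun i : Fin m => v (μs i.castSucc) (l i)).prod
              * ∑ σ : Fin n, v (μs (Fin.last m)) σ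
                  * HopfAlgebra.antipode (R := K) (v σ ν)) := by
          simp_rw [hVS]
        _ = ∑ σ : Fin n, wc (Fin.snoc l σ) • HopfAlgebra.antipode (R := K) (v σ ν) := by
          simp_rw [e1]
          rw [Finset.sum_comm]
          refine Finset.sum_congr rfl fun μs _ => ?_
          rw [Finset.mul_sum, Finset.smul_sum]
          refine Finset.sum_congr rfl fun σ _ => ?_
          congr 1
          rw [prod_ofFn_snoc]
          simp only [Fin.snoc_castSucc, Fin.snoc_last, mul_assoc]
  -- explicit formula for the antipode on v
  have hA : ∀ ρ ν : Fin n,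
      HopfAlgebra.antipode (R := K) (v ρ ν)
        = ∑ l : Fin m → Fin n, ∑ μ' : Fin m → Fin n,
            (wt (Fin.cons ρ l) * wc (Fin.snoc μ' ν)) •
              (List.ofFn fun i => v (μ' i) (l i)).prod := by
    intro ρ ν
    have key : ∑ l : Fin m → Fin n, wt (Fin.cons ρ l) •
        (∑ σ : Fin n, wc (Fin.snoc l σ) • HopfAlgebra.antipode (R := K) (v σ ν))
          = HopfAlgebra.antipode (R := K) (v ρ ν) := by
      simp_rw [Finset.smul_sum, smul_smul]
      rw [Finset.sum_comm]
      simp_rw [← Finset.sum_smul, hwt]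
      simp
    rw [← key]
    refine Finset.sum_congr rfl fun l _ => ?_
    rw [← hstar l ν, Finset.smul_sum]
    simp_rw [smul_smul]
  -- w-preservation with the first factor split off
  have hpres' : ∀ (lam : Fin n) (l : Fin m → Fin n),
      ∑ ρ : Fin n, ∑ μ' : Fin m → Fin n,
          wc (Fin.cons ρ μ') • (v ρ lam * (List.ofFn fun i => v (μ' i) (l i)).prod)
        = wc (Fin.cons lam l) • (1 : H) := by
    intro lam l
    have h := hpres (Fin.cons lam l)
    rw [sum_cons_eq (n := n) (m := m)] at h
    rw [← h]
    refine Finset.sum_congr rfl fun ρ _ => Finset.sum_congr rfl fun μ' _ => ?_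
    congr 1
    rw [prod_ofFn_succ]
    simp [Fin.cons_succ]
  -- the twisted relation holds for v
  have htus : ∀ μ ν : Fin n,
      ∑ lam : Fin n, ∑ ρ : Fin n, ∑ σ : Fin n,
          (Q lam ν * Qi σ ρ) • (v ρ lam * HopfAlgebra.antipode (R := K) (v μ σ))
        = if μ = ν then (1 : H) else 0 := by
    intro μ ν
    have inner : ∀ (lam ρ : Fin n),
        ∑ σ : Fin n, (Q lam ν * Qi σ ρ) •
            (v ρ lam * HopfAlgebra.antipode (R := K) (v μ σ))
          = ∑ l : Fin m → Fin n, ∑ μ' : Fin m → Fin n,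
              ((Q lam ν * wt (Fin.cons μ l)) * wc (Fin.cons ρ μ')) •
                (v ρ lam * (List.ofFn fun i => v (μ' i) (l i)).prod) := by
      intro lam ρ
      calc ∑ σ : Fin n, (Q lam ν * Qi σ ρ) •
            (v ρ lam * HopfAlgebra.antipode (R := K) (v μ σ))
          = ∑ σ : Fin n, ∑ l : Fin m → Fin n, ∑ μ' : Fin m → Fin n,
              ((Q lam ν * Qi σ ρ) * (wt (Fin.cons μ l) * wc (Fin.snoc μ' σ))) •
                (v ρ lam * (List.ofFn fun i => v (μ' i) (l i)).prod) := by
            refine Finset.sum_congr rfl fun σ _ => ?_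
            rw [hA μ σ]
            rw [Finset.mul_sum, Finset.smul_sum]
            refine Finset.sum_congr rfl fun l _ => ?_
            rw [Finset.mul_sum, Finset.smul_sum]
            refine Finset.sum_congr rfl fun μ' _ => ?_
            rw [mul_smul_comm, smul_smul]
        _ = ∑ l : Fin m → Fin n, ∑ μ' : Fin m → Fin n,
              (∑ σ : Fin n, (Q lam ν * Qi σ ρ) * (wt (Fin.cons μ l) * wc (Fin.snoc μ' σ))) •
                (v ρ lam * (List.ofFn fun i => v (μ' i) (l i)).prod) := by
            rw [Finset.sum_comm]
            refine Finset.sum_congr rfl fun l _ => ?_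
            rw [Finset.sum_comm]
            refine Finset.sum_congr rfl fun μ' _ => ?_
            rw [Finset.sum_smul]
        _ = _ := by
            refine Finset.sum_congr rfl fun l _ => Finset.sum_congr rfl fun μ' _ => ?_
            congr 1
            calc ∑ σ : Fin n, (Q lam ν * Qi σ ρ) * (wt (Fin.cons μ l) * wc (Fin.snoc μ' σ))
                = (Q lam ν * wt (Fin.cons μ l)) *
                    ∑ σ : Fin n, Qi σ ρ * wc (Fin.snoc μ' σ) := by
                  rw [Finset.mul_sum]
                  exact Finset.sum_congr rfl fun σ _ => by ring
              _ = (Q lam ν * wt (Fin.cons μ l)) * wc (Fin.cons ρ μ') := by rw [hQiw]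
    calc ∑ lam : Fin n, ∑ ρ : Fin n, ∑ σ : Fin n,
          (Q lam ν * Qi σ ρ) • (v ρ lam * HopfAlgebra.antipode (R := K) (v μ σ))
        = ∑ lam : Fin n, ∑ l : Fin m → Fin n, (Q lam ν * wt (Fin.cons μ l)) •
            (∑ ρ : Fin n, ∑ μ' : Fin m → Fin n,
              wc (Fin.cons ρ μ') • (v ρ lam * (List.ofFn fun i => v (μ' i) (l i)).prod)) := by
          refine Finset.sum_congr rfl fun lam _ => ?_
          simp_rw [inner]
          rw [Finset.sum_comm]
          refine Finset.sum_congr rfl fun l _ => ?_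
          rw [Finset.smul_sum]
          refine Finset.sum_congr rfl fun ρ _ => ?_
          rw [Finset.smul_sum]
          refine Finset.sum_congr rfl fun μ' _ => ?_
          rw [smul_smul]
      _ = ∑ lam : Fin n, ∑ l : Fin m → Fin n,
            ((Q lam ν * wt (Fin.cons μ l)) * wc (Fin.cons lam l)) • (1 : H) := by
          refine Finset.sum_congr rfl fun lam _ => Finset.sum_congr rfl fun l _ => ?_
          rw [hpres', smul_smul]
      _ = (∑ l : Fin m → Fin n, wt (Fin.cons μ l) * wc (Fin.snoc l ν)) • (1 : H) := by
          rw [Finset.sum_comm]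
          have hx : ∀ l : Fin m → Fin n,
              ∑ lam : Fin n, (Q lam ν * wt (Fin.cons μ l) * wc (Fin.cons lam l)) • (1 : H)
                = (wt (Fin.cons μ l) * wc (Fin.snoc l ν)) • (1 : H) := by
            intro l
            rw [← Finset.sum_smul]
            congr 1
            rw [← hcw l ν, Finset.mul_sum]
            exact Finset.sum_congr rfl fun lam _ => by ring
          rw [Finset.sum_congr rfl fun l _ => hx l, ← Finset.sum_smul]
      _ = if μ = ν then (1 : H) else 0 := by
          rw [hwt]
          split_ifs <;> simp
  -- f respects the relations
  have hrel : ∀ ⦃a b : FA K n⦄, HwRel K n m wc Q Qi a b → f a = f b := by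
    intro a b h
    induction h with
    | us μ ν =>
        simp only [map_sum, map_mul, hfU, hfS]
        rw [hVS μ ν]
        split_ifs <;> simp
    | tus μ ν =>
        simp only [map_sum, map_smul, map_mul, hfU, hfS]
        rw [htus μ ν]
        split_ifs <;> simp
    | invw μs =>
        simp only [map_sum, map_smul, hfprod]
        rw [hpres μs, AlgHom.commutes, Algebra.smul_def, mul_one]
  -- the lifted map
  refine ⟨RingQuot.liftAlgHom K ⟨f, hrel⟩, ⟨?_, ?_⟩, ?_⟩
  · intro μ ν
    rw [uu, RingQuot.liftAlgHom_mkAlgHom_apply, hfU]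
  · intro μ ν
    rw [ss, RingQuot.liftAlgHom_mkAlgHom_apply, hfS]
  · rintro ψ ⟨hψu, hψs⟩
    have hcomp : ψ.comp (RingQuot.mkAlgHom K (HwRel K n m wc Q Qi))
        = (RingQuot.liftAlgHom K ⟨f, hrel⟩).comp
            (RingQuot.mkAlgHom K (HwRel K n m wc Q Qi)) := by
      apply FreeAlgebra.hom_ext
      funext x
      rcases x with ⟨μ, ν⟩ | ⟨μ, ν⟩
      · simp only [Function.comp_apply, AlgHom.coe_comp]
        have h1 : ψ (RingQuot.mkAlgHom K (HwRel K n m wc Q Qi) (Ug K μ ν)) = v μ ν :=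
          hψu μ ν
        have h2 : (RingQuot.liftAlgHom K ⟨f, hrel⟩)
            (RingQuot.mkAlgHom K (HwRel K n m wc Q Qi) (Ug K μ ν)) = v μ ν := by
          rw [RingQuot.liftAlgHom_mkAlgHom_apply, hfU]
        exact h1.trans h2.symm
      · simp only [Function.comp_apply, AlgHom.coe_comp]
        have h1 : ψ (RingQuot.mkAlgHom K (HwRel K n m wc Q Qi) (Sg K μ ν))
            = HopfAlgebra.antipode (R := K) (v μ ν) := hψs μ ν
        have h2 : (RingQuot.liftAlgHom K ⟨f, hrel⟩)
            (RingQuot.mkAlgHom K (HwRel K n m wc Q Qi) (Sg K μ ν))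
            = HopfAlgebra.antipode (R := K) (v μ ν) := by
          rw [RingQuot.liftAlgHom_mkAlgHom_apply, hfS]
        exact h1.trans h2.symm
    exact RingQuot.ringQuot_ext' K _ _ hcomp

end Stmt15
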